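/- For all α ∈ ℝ and s ≥ 0, D_P(α, s) = v·r if and only if α = −ρ/r. Moreover, for every s ≥ 0, D_C(−ρ/r, s) ≥ D_C(−ρ/r, 0) = v·ρ²/r. Hence the maximum-privacy equilibrium is achieved by Y = X − (ρ/r)θ with no added noise, at distortion v·ρ²/r. -/

import Mathlib

/-- `Q α = 1 + 2αρ + α²r`, the normalized second moment of `Y = X + αθ` (divided by `v`). -/
noncomputable def Q (ρ r α : ℝ) : ℝ := 1 + 2 * α * ρ + α ^ 2 * r

/-- Distortion `D_C(α, s) = E(X − E[X|Y])²` for `Y = X + αθ + S`, `S ~ N(0, s)`. -/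
noncomputable def DC (v ρ r α s : ℝ) : ℝ :=
  v * (1 - (1 + α * ρ) ^ 2 / (Q ρ r α + s / v))

/-- Privacy level `D_P(α, s) = E(θ − E[θ|Y])²` for `Y = X + αθ + S`, `S ~ N(0, s)`. -/
noncomputable def DP (v ρ r α s : ℝ) : ℝ :=
  v * (r - (ρ + r * α) ^ 2 / (Q ρ r α + s / v))
/-- The maximum-privacy equilibrium: `D_P(α,s) = vr` iff `α = −ρ/r`, and at `α = −ρ/r`
the distortion is minimized by adding no noise, with `D_C(−ρ/r, 0) = vρ²/r`. -/
theorem max_privacy_endpoint (v ρ r : ℝ) (hv : 0 < v) (hρ : 0 ≤ ρ) (hr : ρ ^ 2 < r) :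
    (∀ (α s : ℝ), 0 ≤ s → (DP v ρ r α s = v * r ↔ α = -ρ / r)) ∧
    (∀ s : ℝ, 0 ≤ s → DC v ρ r (-ρ / r) s ≥ DC v ρ r (-ρ / r) 0) ∧
    DC v ρ r (-ρ / r) 0 = v * ρ ^ 2 / r := by
  have hr0 : (0:ℝ) < r := lt_of_le_of_lt (sq_nonneg ρ) hr
  have hQpos : ∀ α : ℝ, 0 < Q ρ r α := by
    intro α
    have h1 : 0 < r * Q ρ r α := by
      have h2 : r * Q ρ r α = (ρ + r * α) ^ 2 + (r - ρ ^ 2) := by unfold Q; ring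
      nlinarith [sq_nonneg (ρ + r * α)]
    nlinarith
  have hden : ∀ (α s : ℝ), 0 ≤ s → 0 < Q ρ r α + s / v := by
    intro α s hs
    have := hQpos α
    have : 0 ≤ s / v := div_nonneg hs hv.le
    linarith [hQpos α]
  -- Q at α = -ρ/r
  have hQval : Q ρ r (-ρ / r) = 1 - ρ ^ 2 / r := by
    unfold Q; field_simp; ring
  have hk : 0 < 1 - ρ ^ 2 / r := by
    rw [sub_pos, div_lt_one hr0]; exact hr
  refine ⟨?_, ?_, ?_⟩
  · intro α s hs
    have hd := hden α s hs
    constructor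
    · intro h
      unfold DP at h
      have h2 : (ρ + r * α) ^ 2 / (Q ρ r α + s / v) = 0 := by
        have := mul_left_cancel₀ hv.ne' (by linarith [h] : v * (r - (ρ + r * α) ^ 2 / (Q ρ r α + s / v)) = v * r)
        linarith [this]
      have h3 : (ρ + r * α) ^ 2 = 0 := by
        rcases div_eq_zero_iff.mp h2 with h2 | h2
        · exact h2
        · exact absurd h2 hd.ne'
      have h4 : ρ + r * α = 0 := by nlinarith [sq_nonneg (ρ + r * α)]
      field_simp
      linarith
    · intro h
      subst h
      unfold DP
      have : ρ + r * (-ρ / r) = 0 := by field_simp; ring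
      rw [this]
      simp
  · intro s hs
    unfold DC
    rw [hQval]
    have hd0 : 0 < 1 - ρ ^ 2 / r + (0:ℝ) / v := by simpa using hk
    have hds : 0 < 1 - ρ ^ 2 / r + s / v := by
      have : 0 ≤ s / v := div_nonneg hs hv.le
      linarith
    have hαρ : (1 + (-ρ / r) * ρ) = 1 - ρ ^ 2 / r := by field_simp; ring
    rw [hαρ]
    have key : (1 - ρ ^ 2 / r) ^ 2 / (1 - ρ ^ 2 / r + s / v)
        ≤ (1 - ρ ^ 2 / r) ^ 2 / (1 - ρ ^ 2 / r + 0 / v) := by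
      apply div_le_div_of_nonneg_left (sq_nonneg _) hd0
      simp
      exact div_nonneg hs hv.le
    have := mul_le_mul_of_nonneg_left (by linarith : (1 : ℝ) - (1 - ρ ^ 2 / r) ^ 2 / (1 - ρ ^ 2 / r + 0 / v) ≤ 1 - (1 - ρ ^ 2 / r) ^ 2 / (1 - ρ ^ 2 / r + s / v)) hv.le
    linarith
  · unfold DC
    rw [hQval]
    have hαρ : (1 + (-ρ / r) * ρ) = 1 - ρ ^ 2 / r := by field_simp; ring
    rw [hαρ]
    simp only [zero_div, add_zero]
    rw [pow_two, mul_div_assoc, div_self hk.ne', mul_one]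
    field_simp
    ring
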